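/- Let m, n be positive natural numbers, M : Fin m → Fin n → ℝ a payoff matrix, P and Q the standard simplices of ℝ^m and ℝ^n, and Γ : P × Q → P × Q the map Γ(p,q) = (p'(p,q), q'(p,q)) with p'_i(p,q) = (p_i + max(M(a_i,q) − M(p,q), 0)) / (1 + Σ_k max(M(a_k,q) − M(p,q), 0)) and q'_j(p,q) = (q_j + max(M(p,q) − M(p,b_j), 0)) / (1 + Σ_k max(M(p,q) − M(p,b_k), 0)). Suppose M satisfies: for all sequences ((p_n, q_n)) and ((p'_n, q'_n)) in P × Q such that max(M(a_i, q_n) − M(p_n, q_n), 0) → 0 and max(M(p_n, q_n) − M(p_n, b_j), 0) → 0 for all i, j, and likewise for ((p'_n, q'_n)), one has |(p_n, q_n) − (p'_n, q'_n)| → 0. Then Γ has sequentially at most one fixed point: for all sequences ((p_n, q_n)), ((p'_n, q'_n)) in P × Q with |Γ(p_n, q_n) − (p_n, q_n)| → 0 and |Γ(p'_n, q'_n) − (p'_n, q'_n)| → 0, one has |(p_n, q_n) − (p'_n, q'_n)| → 0. -/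

import Mathlib

open Finset Filter Topology

/-- Expected payoff of player A at profile `(p, q)`. -/
noncomputable def expPayoff {m n : ℕ} (M : Fin m → Fin n → ℝ)
    (p : Fin m → ℝ) (q : Fin n → ℝ) : ℝ :=
  ∑ i, ∑ j, p i * M i j * q j

/-- Payoff `M(a_i, q)` of pure strategy `a_i` against mixed strategy `q`. -/
noncomputable def rowPayoff {m n : ℕ} (M : Fin m → Fin n → ℝ)
    (q : Fin n → ℝ) (i : Fin m) : ℝ :=
  ∑ j, M i j * q j

/-- Payoff `M(p, b_j)` of mixed strategy `p` against pure strategy `b_j`. -/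
noncomputable def colPayoff {m n : ℕ} (M : Fin m → Fin n → ℝ)
    (p : Fin m → ℝ) (j : Fin n) : ℝ :=
  ∑ i, p i * M i j

/-- First component `p'(p, q)` of the map `Γ`. -/
noncomputable def pNext {m n : ℕ} (M : Fin m → Fin n → ℝ)
    (p : Fin m → ℝ) (q : Fin n → ℝ) (i : Fin m) : ℝ :=
  (p i + max (rowPayoff M q i - expPayoff M p q) 0) /
    (1 + ∑ k, max (rowPayoff M q k - expPayoff M p q) 0)

/-- Second component `q'(p, q)` of the map `Γ`. -/
noncomputable def qNext {m n : ℕ} (M : Fin m → Fin n → ℝ)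
    (p : Fin m → ℝ) (q : Fin n → ℝ) (j : Fin n) : ℝ :=
  (q j + max (expPayoff M p q - colPayoff M p j) 0) /
    (1 + ∑ k, max (expPayoff M p q - colPayoff M p k) 0)

/-- The map `Γ(p,q) = (p'(p,q), q'(p,q))`. -/
noncomputable def Gamma {m n : ℕ} (M : Fin m → Fin n → ℝ)
    (x : (Fin m → ℝ) × (Fin n → ℝ)) : (Fin m → ℝ) × (Fin n → ℝ) :=
  (pNext M x.1 x.2, qNext M x.1 x.2)

lemma rowT {m n : ℕ} (M : Fin m → Fin n → ℝ) (p : Fin m → ℝ) (j : Fin n) :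
    rowPayoff (fun j i => -M i j) p j = - colPayoff M p j := by
  simp [rowPayoff, colPayoff, ← Finset.sum_neg_distrib, mul_comm]

lemma expT {m n : ℕ} (M : Fin m → Fin n → ℝ) (p : Fin m → ℝ) (q : Fin n → ℝ) :
    expPayoff (fun j i => -M i j) q p = - expPayoff M p q := by
  unfold expPayoff
  rw [Finset.sum_comm]
  rw [show (∑ i, ∑ j, q j * (fun j i => -M i j) j i * p i) = ∑ i, ∑ j, -(p i * M i j * q j)
    from Finset.sum_congr rfl fun i _ => Finset.sum_congr rfl fun j _ => by ring]
  simp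

lemma diffT {m n : ℕ} (M : Fin m → Fin n → ℝ) (p : Fin m → ℝ) (q : Fin n → ℝ) (j : Fin n) :
    rowPayoff (fun j i => -M i j) p j - expPayoff (fun j i => -M i j) q p =
      expPayoff M p q - colPayoff M p j := by
  rw [rowT, expT]; ring

lemma qNextT {m n : ℕ} (M : Fin m → Fin n → ℝ) (p : Fin m → ℝ) (q : Fin n → ℝ) :
    qNext M p q = pNext (fun j i => -M i j) q p := by
  funext j
  simp only [qNext, pNext, diffT]
lemma key1 {m n : ℕ} (M : Fin m → Fin n → ℝ) {p : Fin m → ℝ} {q : Fin n → ℝ}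
    (hp : p ∈ stdSimplex ℝ (Fin m)) (hq : q ∈ stdSimplex ℝ (Fin n)) :
    (∑ i, max (rowPayoff M q i - expPayoff M p q) 0) ^ 2 ≤
      (m * (1 + 2 * m * (∑ i, ∑ j, |M i j|)) * (2 * (∑ i, ∑ j, |M i j|))) *
        ∑ i, |pNext M p q i - p i| := by
  set C : ℝ := ∑ i, ∑ j, |M i j| with hC
  set e : ℝ := expPayoff M p q with he
  set r : Fin m → ℝ := rowPayoff M q with hr
  set φ : Fin m → ℝ := fun i => max (r i - e) 0 with hφ
  set S : ℝ := ∑ i, φ i with hS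
  have hφ0 : ∀ i, 0 ≤ φ i := fun i => le_max_right _ _
  have hS0 : 0 ≤ S := Finset.sum_nonneg fun i _ => hφ0 i
  have h1S : (0:ℝ) < 1 + S := by linarith
  have hC0 : 0 ≤ C := Finset.sum_nonneg fun i _ => Finset.sum_nonneg fun j _ => abs_nonneg _
  -- coordinates bounded by 1
  have hq1 : ∀ j, q j ≤ 1 := fun j => by
    calc q j ≤ ∑ j', q j' := Finset.single_le_sum (fun j' _ => hq.1 j') (mem_univ j)
    _ = 1 := hq.2
  have hp1 : ∀ i, p i ≤ 1 := fun i => by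
    calc p i ≤ ∑ i', p i' := Finset.single_le_sum (fun i' _ => hp.1 i') (mem_univ i)
    _ = 1 := hp.2
  -- bound on rowPayoff
  have hrbd : ∀ i, |r i| ≤ C := by
    intro i
    calc |r i| ≤ ∑ j, |M i j * q j| := Finset.abs_sum_le_sum_abs _ _
    _ ≤ ∑ j, |M i j| := by
        refine Finset.sum_le_sum fun j _ => ?_
        rw [abs_mul, abs_of_nonneg (hq.1 j)]
        nlinarith [mul_nonneg (abs_nonneg (M i j)) (sub_nonneg.2 (hq1 j))]
    _ ≤ C := Finset.single_le_sum (f := fun i => ∑ j, |M i j|)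
          (fun i' _ => Finset.sum_nonneg fun j _ => abs_nonneg _) (mem_univ i)
  have hebd : |e| ≤ C := by
    calc |e| ≤ ∑ i, |∑ j, p i * M i j * q j| := Finset.abs_sum_le_sum_abs _ _
    _ ≤ ∑ i, ∑ j, |M i j| := by
        refine Finset.sum_le_sum fun i _ => ?_
        calc |∑ j, p i * M i j * q j| ≤ ∑ j, |p i * M i j * q j| :=
              Finset.abs_sum_le_sum_abs _ _
        _ ≤ ∑ j, |M i j| := by
            refine Finset.sum_le_sum fun j _ => ?_
            rw [abs_mul, abs_mul, abs_of_nonneg (hp.1 i), abs_of_nonneg (hq.1 j)]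
            nlinarith [mul_nonneg (mul_nonneg (sub_nonneg.2 (hp1 i)) (abs_nonneg (M i j))) (hq.1 j),
              mul_nonneg (abs_nonneg (M i j)) (sub_nonneg.2 (hq1 j))]
  have hφbd : ∀ i, φ i ≤ 2 * C := by
    intro i
    have : r i - e ≤ 2 * C := by
      have := (abs_le.1 (hrbd i)).2
      have := (abs_le.1 hebd).1
      linarith
    exact max_le this (by linarith)
  have hSbd : S ≤ 2 * m * C := by
    calc S ≤ ∑ _i : Fin m, 2 * C := Finset.sum_le_sum fun i _ => hφbd i
    _ = m * (2 * C) := by simp [Finset.sum_const, mul_comm]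
    _ = 2 * m * C := by ring
  -- Σ pᵢ rᵢ = e
  have hpre : ∑ i, p i * r i = e := by
    simp only [hr, he, rowPayoff, expPayoff, Finset.mul_sum]
    exact Finset.sum_congr rfl fun i _ => Finset.sum_congr rfl fun j _ => by ring
  have hzero : ∑ i, p i * (r i - e) = 0 := by
    simp only [mul_sub, Finset.sum_sub_distrib, hpre, ← Finset.sum_mul, hp.2]
    ring
  -- fixed point defect identity
  set ε : Fin m → ℝ := fun i => pNext M p q i - p i with hε
  have hid : ∀ i, φ i - p i * S = ε i * (1 + S) := by
    intro i
    have : pNext M p q i = (p i + φ i) / (1 + S) := rfl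
    rw [hε]
    simp only [this]
    field_simp
    ring
  have hsq : ∀ i, φ i * (r i - e) = φ i ^ 2 := by
    intro i
    rcases le_total (r i - e) 0 with h | h
    · simp [hφ, max_eq_right h]
    · simp [hφ, max_eq_left h]; ring
  have hmain : ∑ i, φ i ^ 2 = (1 + S) * ∑ i, ε i * (r i - e) := by
    rw [Finset.mul_sum]
    have step : ∀ i, φ i ^ 2 = (1 + S) * (ε i * (r i - e)) + S * (p i * (r i - e)) := by
      intro i
      have h1 := hid i
      have h2 := hsq i
      linear_combination (r i - e) * h1 - h2
    calc ∑ i, φ i ^ 2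
        = ∑ i, ((1 + S) * (ε i * (r i - e)) + S * (p i * (r i - e))) :=
          Finset.sum_congr rfl fun i _ => step i
      _ = ∑ i, (1 + S) * (ε i * (r i - e)) + S * ∑ i, p i * (r i - e) := by
          rw [Finset.sum_add_distrib, Finset.mul_sum]
      _ = ∑ i, (1 + S) * (ε i * (r i - e)) := by rw [hzero]; ring
  -- Cauchy-Schwarz
  have hcs : S ^ 2 ≤ m * ∑ i, φ i ^ 2 := by
    have := sq_sum_le_card_mul_sum_sq (s := (univ : Finset (Fin m))) (f := φ)
    simpa using this
  -- bound the RHS of hmain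
  have hbd2 : ∑ i, ε i * (r i - e) ≤ (2 * C) * ∑ i, |ε i| := by
    rw [Finset.mul_sum]
    refine Finset.sum_le_sum fun i _ => ?_
    have h1 : |r i - e| ≤ 2 * C := by
      have := abs_sub_abs_le_abs_sub (r i) e
      have h2 := abs_sub (r i) e
      calc |r i - e| ≤ |r i| + |e| := abs_sub _ _
      _ ≤ 2 * C := by linarith [hrbd i, hebd]
    calc ε i * (r i - e) ≤ |ε i * (r i - e)| := le_abs_self _
    _ = |ε i| * |r i - e| := abs_mul _ _
    _ ≤ |ε i| * (2 * C) := by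
        exact mul_le_mul_of_nonneg_left h1 (abs_nonneg _)
    _ = 2 * C * |ε i| := by ring
  have hεnn : 0 ≤ ∑ i, |ε i| := Finset.sum_nonneg fun i _ => abs_nonneg _
  calc S ^ 2 ≤ m * ∑ i, φ i ^ 2 := hcs
  _ = m * ((1 + S) * ∑ i, ε i * (r i - e)) := by rw [hmain]
  _ ≤ m * ((1 + 2 * m * C) * ((2 * C) * ∑ i, |ε i|)) := by
      have hm0 : (0:ℝ) ≤ m := Nat.cast_nonneg m
      have h1 : (1 + S) * ∑ i, ε i * (r i - e) ≤ (1 + 2 * m * C) * ((2 * C) * ∑ i, |ε i|) := by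
        have hA : (1 + S) * ∑ i, ε i * (r i - e) ≤ (1 + S) * ((2 * C) * ∑ i, |ε i|) :=
          mul_le_mul_of_nonneg_left hbd2 (le_of_lt h1S)
        have hB : (1 + S) * ((2 * C) * ∑ i, |ε i|) ≤ (1 + 2 * m * C) * ((2 * C) * ∑ i, |ε i|) := by
          apply mul_le_mul_of_nonneg_right (by linarith) (by positivity)
        linarith
      exact mul_le_mul_of_nonneg_left h1 hm0
  _ = m * (1 + 2 * m * C) * (2 * C) * ∑ i, |ε i| := by ring
lemma aux_tendsto {m n : ℕ} (M : Fin m → Fin n → ℝ)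
    (x : ℕ → (Fin m → ℝ) × (Fin n → ℝ))
    (hx : ∀ k, (x k).1 ∈ stdSimplex ℝ (Fin m) ∧ (x k).2 ∈ stdSimplex ℝ (Fin n))
    (hd : Tendsto (fun k => ∑ i, |pNext M (x k).1 (x k).2 i - (x k).1 i|) atTop (𝓝 0)) :
    ∀ i : Fin m, Tendsto
      (fun k => max (rowPayoff M (x k).2 i - expPayoff M (x k).1 (x k).2) 0) atTop (𝓝 0) := by
  set C : ℝ := ∑ i, ∑ j, |M i j| with hC
  set K : ℝ := m * (1 + 2 * m * C) * (2 * C) with hK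
  set S : ℕ → ℝ := fun k => ∑ i, max (rowPayoff M (x k).2 i - expPayoff M (x k).1 (x k).2) 0
    with hSdef
  have hS0 : ∀ k, 0 ≤ S k := fun k =>
    Finset.sum_nonneg fun i _ => le_max_right _ _
  have hS2 : ∀ k, S k ^ 2 ≤ K * ∑ i, |pNext M (x k).1 (x k).2 i - (x k).1 i| :=
    fun k => key1 M (hx k).1 (hx k).2
  have hKg : Tendsto (fun k => K * ∑ i, |pNext M (x k).1 (x k).2 i - (x k).1 i|)
      atTop (𝓝 0) := by
    have := hd.const_mul K
    simpa using this
  have hsqrt : Tendsto (fun k =>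
      Real.sqrt (K * ∑ i, |pNext M (x k).1 (x k).2 i - (x k).1 i|)) atTop (𝓝 0) := by
    have := (Real.continuous_sqrt.tendsto 0).comp hKg
    simpa [Function.comp_def] using this
  have hStend : Tendsto S atTop (𝓝 0) := by
    refine squeeze_zero hS0 (fun k => ?_) hsqrt
    calc S k = Real.sqrt (S k ^ 2) := by rw [Real.sqrt_sq (hS0 k)]
    _ ≤ _ := Real.sqrt_le_sqrt (hS2 k)
  intro i
  refine squeeze_zero (fun k => le_max_right _ _) (fun k => ?_) hStend
  exact Finset.single_le_sum
    (f := fun i' => max (rowPayoff M (x k).2 i' - expPayoff M (x k).1 (x k).2) 0)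
    (fun i' _ => le_max_right _ _) (mem_univ i)
theorem gamma_seq_at_most_one_fixed_point {m n : ℕ} (hm : 0 < m) (hn : 0 < n)
    (M : Fin m → Fin n → ℝ)
    (hM : ∀ x y : ℕ → (Fin m → ℝ) × (Fin n → ℝ),
      (∀ k, (x k).1 ∈ stdSimplex ℝ (Fin m) ∧ (x k).2 ∈ stdSimplex ℝ (Fin n)) →
      (∀ k, (y k).1 ∈ stdSimplex ℝ (Fin m) ∧ (y k).2 ∈ stdSimplex ℝ (Fin n)) →
      (∀ i : Fin m, Tendsto
        (fun k => max (rowPayoff M (x k).2 i - expPayoff M (x k).1 (x k).2) 0) atTop (𝓝 0)) →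
      (∀ j : Fin n, Tendsto
        (fun k => max (expPayoff M (x k).1 (x k).2 - colPayoff M (x k).1 j) 0) atTop (𝓝 0)) →
      (∀ i : Fin m, Tendsto
        (fun k => max (rowPayoff M (y k).2 i - expPayoff M (y k).1 (y k).2) 0) atTop (𝓝 0)) →
      (∀ j : Fin n, Tendsto
        (fun k => max (expPayoff M (y k).1 (y k).2 - colPayoff M (y k).1 j) 0) atTop (𝓝 0)) →
      Tendsto (fun k => dist (x k) (y k)) atTop (𝓝 0)) :
    ∀ x y : ℕ → (Fin m → ℝ) × (Fin n → ℝ),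
      (∀ k, (x k).1 ∈ stdSimplex ℝ (Fin m) ∧ (x k).2 ∈ stdSimplex ℝ (Fin n)) →
      (∀ k, (y k).1 ∈ stdSimplex ℝ (Fin m) ∧ (y k).2 ∈ stdSimplex ℝ (Fin n)) →
      Tendsto (fun k => dist (Gamma M (x k)) (x k)) atTop (𝓝 0) →
      Tendsto (fun k => dist (Gamma M (y k)) (y k)) atTop (𝓝 0) →
      Tendsto (fun k => dist (x k) (y k)) atTop (𝓝 0) := by
  intro x y hx hy hgx hgy
  -- p-side defect sums tend to 0
  have hdp : ∀ z : ℕ → (Fin m → ℝ) × (Fin n → ℝ),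
      Tendsto (fun k => dist (Gamma M (z k)) (z k)) atTop (𝓝 0) →
      Tendsto (fun k => ∑ i, |pNext M (z k).1 (z k).2 i - (z k).1 i|) atTop (𝓝 0) := by
    intro z hz
    refine squeeze_zero (fun k => Finset.sum_nonneg fun i _ => abs_nonneg _) (fun k => ?_)
      (by simpa using hz.const_mul (m : ℝ))
    calc ∑ i, |pNext M (z k).1 (z k).2 i - (z k).1 i|
        ≤ ∑ _i : Fin m, dist (Gamma M (z k)) (z k) := by
          refine Finset.sum_le_sum fun i _ => ?_
          have h1 : |pNext M (z k).1 (z k).2 i - (z k).1 i| =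
              dist ((Gamma M (z k)).1 i) ((z k).1 i) := by
            rw [Real.dist_eq]; rfl
          rw [h1]
          calc dist ((Gamma M (z k)).1 i) ((z k).1 i)
              ≤ dist (Gamma M (z k)).1 (z k).1 := dist_le_pi_dist _ _ i
          _ ≤ dist (Gamma M (z k)) (z k) := by
              rw [Prod.dist_eq]; exact le_max_left _ _
    _ = m * dist (Gamma M (z k)) (z k) := by simp
  -- q-side defect sums tend to 0
  have hdq : ∀ z : ℕ → (Fin m → ℝ) × (Fin n → ℝ),
      Tendsto (fun k => dist (Gamma M (z k)) (z k)) atTop (𝓝 0) →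
      Tendsto (fun k => ∑ j, |qNext M (z k).1 (z k).2 j - (z k).2 j|) atTop (𝓝 0) := by
    intro z hz
    refine squeeze_zero (fun k => Finset.sum_nonneg fun j _ => abs_nonneg _) (fun k => ?_)
      (by simpa using hz.const_mul (n : ℝ))
    calc ∑ j, |qNext M (z k).1 (z k).2 j - (z k).2 j|
        ≤ ∑ _j : Fin n, dist (Gamma M (z k)) (z k) := by
          refine Finset.sum_le_sum fun j _ => ?_
          have h1 : |qNext M (z k).1 (z k).2 j - (z k).2 j| =
              dist ((Gamma M (z k)).2 j) ((z k).2 j) := by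
            rw [Real.dist_eq]; rfl
          rw [h1]
          calc dist ((Gamma M (z k)).2 j) ((z k).2 j)
              ≤ dist (Gamma M (z k)).2 (z k).2 := dist_le_pi_dist _ _ j
          _ ≤ dist (Gamma M (z k)) (z k) := by
              rw [Prod.dist_eq]; exact le_max_right _ _
    _ = n * dist (Gamma M (z k)) (z k) := by simp
  -- row side for x and y
  have h1x := aux_tendsto M x hx (hdp x hgx)
  have h1y := aux_tendsto M y hy (hdp y hgy)
  -- column side via transposition
  have h2 : ∀ z : ℕ → (Fin m → ℝ) × (Fin n → ℝ),
      (∀ k, (z k).1 ∈ stdSimplex ℝ (Fin m) ∧ (z k).2 ∈ stdSimplex ℝ (Fin n)) →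
      Tendsto (fun k => dist (Gamma M (z k)) (z k)) atTop (𝓝 0) →
      ∀ j : Fin n, Tendsto
        (fun k => max (expPayoff M (z k).1 (z k).2 - colPayoff M (z k).1 j) 0) atTop (𝓝 0) := by
    intro z hz hgz
    have hzs : ∀ k, ((fun k => ((z k).2, (z k).1)) k).1 ∈ stdSimplex ℝ (Fin n) ∧
        ((fun k => ((z k).2, (z k).1)) k).2 ∈ stdSimplex ℝ (Fin m) :=
      fun k => ⟨(hz k).2, (hz k).1⟩
    have hdz : Tendsto (fun k => ∑ j, |pNext (fun j i => -M i j) (z k).2 (z k).1 j - (z k).2 j|)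
        atTop (𝓝 0) := by
      have := hdq z hgz
      simpa only [qNextT] using this
    have h := aux_tendsto (fun j i => -M i j) (fun k => ((z k).2, (z k).1)) hzs hdz
    simpa only [diffT] using h
  exact hM x y hx hy h1x (h2 x hx hgx) h1y (h2 y hy hgy)
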